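/- If G is a quasi-Gorenstein projective R-module and Q is a quasi-projective R-module, then Ext^n(G, Q) = 0 for all n ≥ 1. -/

import Mathlib

open CategoryTheory

universe u
variable {R : Type u} [Ring R]

/-- A module `Q` is quasi-projective if every homomorphism from `Q` to a quotient
of `Q` lifts to an endomorphism of `Q`. -/
def QuasiProjective (Q : ModuleCat.{u} R) : Prop :=
  ∀ (B : ModuleCat.{u} R) (g : Q ⟶ B), Function.Surjective g →
    ∀ f : Q ⟶ B, ∃ h : Q ⟶ Q, h ≫ g = f

/-- `M` is quasi-Gorenstein projective if it is a syzygy of an exact complex of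
projective modules (given by short exact sequences `0 → K (n+1) → P n → K n → 0`)
that remains exact under `Hom(-, Q)` for every quasi-projective module `Q`. -/
def QuasiGorensteinProjective (M : ModuleCat.{u} R) : Prop :=
  ∃ (K P : ℤ → ModuleCat.{u} R) (ι : ∀ n, K (n + 1) ⟶ P n) (π : ∀ n, P n ⟶ K n),
    (∀ n, Module.Projective R (P n)) ∧
    (∀ n, Function.Injective (ι n)) ∧
    (∀ n, Function.Surjective (π n)) ∧
    (∀ n, Function.Exact (ι n) (π n)) ∧
    (∀ n (Q : ModuleCat.{u} R), QuasiProjective Q →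
      ∀ f : K (n + 1) ⟶ Q, ∃ g : P n ⟶ Q, ι n ≫ g = f) ∧
    Nonempty (M ≅ K 0)

/-- Factorization through a surjection whose kernel is killed. -/
lemma exists_factor_of_exact {A B C Q : ModuleCat.{u} R} (i : A ⟶ B) (p : B ⟶ C)
    (hsurj : Function.Surjective p) (hex : Function.Exact i p)
    (x : B ⟶ Q) (hx : i ≫ x = 0) : ∃ g : C ⟶ Q, p ≫ g = x := by
  classical
  have key : ∀ b b' : B, p b = p b' → x b = x b' := by
    intro b b' h
    have h1 : p (b - b') = 0 := by rw [map_sub, h, sub_self]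
    obtain ⟨a, ha⟩ := (hex (b - b')).mp h1
    have h2 : x (i a) = 0 := by
      have := ConcreteCategory.congr_hom hx a
      simpa using this
    rw [ha] at h2
    rw [map_sub] at h2
    exact sub_eq_zero.mp h2
  have hs : ∀ c, p (Function.surjInv hsurj c) = c := Function.surjInv_eq hsurj
  refine ⟨ModuleCat.ofHom ⟨⟨fun c => x (Function.surjInv hsurj c), ?_⟩, ?_⟩, ?_⟩
  · intro c c'
    show x (Function.surjInv hsurj (c + c')) =
      x (Function.surjInv hsurj c) + x (Function.surjInv hsurj c')
    rw [← map_add]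
    apply key
    rw [map_add, hs, hs, hs]
  · intro r c
    show x (Function.surjInv hsurj (r • c)) = r • x (Function.surjInv hsurj c)
    rw [← map_smul]
    apply key
    rw [map_smul, hs, hs]
  · ext b
    exact key _ _ (hs (p b))

/-- If `G` is quasi-Gorenstein projective and `Q` is quasi-projective, then
`Ext^n(G, Q) = 0` for all `n ≥ 1`. -/
theorem ext_vanishing_of_quasiGorensteinProjective
    (G Q : ModuleCat.{u} R) (hG : QuasiGorensteinProjective G)
    (hQ : QuasiProjective Q) (n : ℕ) (hn : 1 ≤ n) :
    Subsingleton (((Ext ℤ (ModuleCat.{u} R) n).obj (Opposite.op G)).obj Q) := by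
  obtain ⟨K, P, ι, π, hproj, hinj, hsurj, hexact, hlift, ⟨e⟩⟩ := hG
  have hcomp : ∀ m : ℤ, ι m ≫ π m = 0 := by
    intro m
    ext a
    simpa using (hexact m).apply_apply_eq_zero a
  haveI hPproj : ∀ m : ℤ, Projective (P m) := fun m =>
    (IsProjective.iff_projective (R := R) (P := P m)).mp (hproj m)
  -- the projective resolution of `G`
  let Cx : ChainComplex (ModuleCat.{u} R) ℕ :=
    ChainComplex.of (fun m : ℕ => P m) (fun m : ℕ => π (((m + 1 : ℕ) : ℤ)) ≫ ι m)
      (fun m : ℕ => by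
        have h := hcomp (((m + 1 : ℕ) : ℤ))
        simp only [Category.assoc]
        slice_lhs 2 3 => rw [h]
        simp)
  have hCxd : ∀ m : ℕ, Cx.d (m + 1) m = π (((m + 1 : ℕ) : ℤ)) ≫ ι m := fun m =>
    ChainComplex.of_d (fun m : ℕ => P m) (fun m : ℕ => π (((m + 1 : ℕ) : ℤ)) ≫ ι m) m
  have hf0 : Cx.d 1 0 ≫ (π (((0:ℕ) : ℤ)) ≫ e.inv) = 0 := by
    rw [(hCxd 0 : Cx.d 1 0 = _)]
    have h := hcomp (((0:ℕ) : ℤ))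
    simp only [Category.assoc]
    slice_lhs 2 3 => rw [h]
    simp
  have hCexact : ∀ m : ℕ, Cx.ExactAt (m + 1) := by
    intro m
    rw [HomologicalComplex.exactAt_iff' _ (m + 1 + 1) (m + 1) m (by simp) (by simp),
      ShortComplex.moduleCat_exact_iff]
    dsimp [HomologicalComplex.sc', HomologicalComplex.shortComplexFunctor']
    rw [hCxd m, hCxd (m + 1)]
    intro x hx
    have h1 : π (((m + 1 : ℕ) : ℤ)) x = 0 := by
      apply hinj ((m : ℤ))
      rw [map_zero]; exact hx
    obtain ⟨k, hk⟩ := (hexact (((m + 1 : ℕ) : ℤ)) x).mp h1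
    obtain ⟨y, hy⟩ := hsurj (((m + 1 + 1 : ℕ) : ℤ)) k
    refine ⟨y, ?_⟩
    show ι (((m + 1 : ℕ) : ℤ)) (π (((m + 1 + 1 : ℕ) : ℤ)) y) = x
    rw [hy, hk]
  let prπ : Cx ⟶ (ChainComplex.single₀ (ModuleCat.{u} R)).obj G :=
    (ChainComplex.toSingle₀Equiv _ _).symm ⟨π (((0:ℕ) : ℤ)) ≫ e.inv, hf0⟩
  have hprπ0 : prπ.f 0 = π (((0:ℕ) : ℤ)) ≫ e.inv :=
    ChainComplex.toSingle₀Equiv_symm_apply_f_zero _ _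
  have heinv : Function.Surjective (e.inv) :=
    (ModuleCat.epi_iff_surjective e.inv).1 inferInstance
  have hsurj0 : Function.Surjective (π (((0:ℕ) : ℤ)) ≫ e.inv) := by
    intro g
    obtain ⟨k, hk⟩ := heinv g
    obtain ⟨p0, hp0⟩ := hsurj _ k
    refine ⟨p0, ?_⟩
    show e.inv (π _ p0) = g
    rw [hp0, hk]
  have hepi : Epi (π (((0:ℕ) : ℤ)) ≫ e.inv) :=
    (ModuleCat.epi_iff_surjective _).2 hsurj0
  have hexact0 : (ShortComplex.mk (Cx.d 1 0) (π (((0:ℕ) : ℤ)) ≫ e.inv) hf0).Exact := by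
    rw [ShortComplex.moduleCat_exact_iff]
    intro x hx
    have h1 : π (((0:ℕ) : ℤ)) x = 0 := by
      apply (ModuleCat.mono_iff_injective e.inv).1 inferInstance
      simpa using hx
    obtain ⟨k, hk⟩ := (hexact (((0:ℕ) : ℤ)) x).mp h1
    obtain ⟨y, hy⟩ := hsurj (((0 + 1 : ℕ) : ℤ)) k
    refine ⟨y, ?_⟩
    have hpt := ConcreteCategory.congr_hom
      (hCxd 0 : Cx.d 1 0 = π (((0 + 1 : ℕ) : ℤ)) ≫ ι (((0:ℕ) : ℤ))) y
    show (Cx.d 1 0) y = x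
    refine hpt.trans ?_
    show ι (((0:ℕ) : ℤ)) (π (((0 + 1 : ℕ) : ℤ)) y) = x
    rw [hy, hk]
  let pr : ProjectiveResolution G :=
    { complex := Cx
      projective := fun m => hPproj (((m : ℕ) : ℤ))
      π := prπ
      quasiIso := ⟨fun i => by
        cases i with
        | zero =>
          rw [ChainComplex.quasiIsoAt₀_iff, ShortComplex.quasiIso_iff_of_zeros']
          · refine (ShortComplex.exact_and_epi_g_iff_of_iso ?_).2 ⟨hexact0, hepi⟩
            exact ShortComplex.isoMk (Iso.refl _) (Iso.refl _) (Iso.refl _)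
              (by exact (Category.id_comp _).trans (Category.comp_id _).symm) (by simp [hprπ0]; exact (Category.id_comp _).trans (Category.comp_id _).symm)
          all_goals rfl
        | succ m =>
          rw [quasiIsoAt_iff_exactAt']
          · exact hCexact m
          · apply ChainComplex.exactAt_succ_single_obj⟩ }
  obtain ⟨m, rfl⟩ : ∃ m, n = m + 1 := ⟨n - 1, by omega⟩
  have hz : Limits.IsZero ((Cx.linearYonedaObj ℤ Q).homology (m + 1)) := by
    rw [← HomologicalComplex.exactAt_iff_isZero_homology]
    rw [HomologicalComplex.exactAt_iff' _ m (m + 1) (m + 1 + 1) (by simp) (by simp)]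
    rw [ShortComplex.moduleCat_exact_iff]
    intro x hx
    let xh : Cx.X (m + 1) ⟶ Q := x
    have hg : Cx.d (m + 1 + 1) (m + 1) ≫ xh = 0 := hx
    rw [hCxd (m + 1), Category.assoc] at hg
    haveI : Epi (π (((m + 1 + 1 : ℕ) : ℤ))) :=
      (ModuleCat.epi_iff_surjective _).2 (hsurj _)
    have hιx : ι (((m + 1 : ℕ) : ℤ)) ≫ xh = 0 :=
      (cancel_epi (π (((m + 1 + 1 : ℕ) : ℤ)))).mp (by rw [hg, Limits.comp_zero])
    obtain ⟨g, hgf⟩ := exists_factor_of_exact (ι (((m + 1 : ℕ) : ℤ)))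
      (π (((m + 1 : ℕ) : ℤ))) (hsurj _) (hexact _) xh hιx
    obtain ⟨h, hh⟩ := hlift ((m : ℤ)) Q hQ g
    refine ⟨h, ?_⟩
    show Cx.d (m + 1) m ≫ h = xh
    rw [hCxd m, Category.assoc, hh, hgf]
  have hz' : Limits.IsZero (((Ext ℤ (ModuleCat.{u} R) (m + 1)).obj (Opposite.op G)).obj Q) :=
    Limits.IsZero.of_iso hz (pr.isoExt (m + 1) Q)
  refine ⟨fun a b => ?_⟩
  rw [← ModuleCat.id_apply _ a, ← ModuleCat.id_apply _ b, hz'.eq_of_src (𝟙 _) 0]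
  rfl
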